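/- In dimension d = 3, the fiducial vector (0, 1, -1)/√2 under the action of the Weyl–Heisenberg group generated by the shift X and clock Z (with ω = e^{2πi/3}) generates 9 unit vectors whose pairwise squared overlaps all equal 1/4; i.e., these vectors form a SIC-POVM in ℂ³ (the Hesse SIC). -/

import Mathlib

open Matrix

set_option maxHeartbeats 4000000 in
theorem hesse_sic_qutrit :
    ∀ (ω : ℂ), ω = Complex.exp (2 * Real.pi * Complex.I / 3) →
    ∀ (X Z : Matrix (Fin 3) (Fin 3) ℂ),
      X = Matrix.of (fun i j : Fin 3 => if i = j + 1 then (1 : ℂ) else 0) →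
      Z = Matrix.of (fun i j : Fin 3 => if i = j then ω ^ (j : ℕ) else 0) →
    ∀ (ψ : Fin 3 → ℂ), ψ = ![0, (Real.sqrt 2 : ℂ)⁻¹, -(Real.sqrt 2 : ℂ)⁻¹] →
    ∀ (φ : Fin 3 × Fin 3 → Fin 3 → ℂ),
      φ = (fun p => ((X ^ (p.1 : ℕ)) * (Z ^ (p.2 : ℕ))).mulVec ψ) →
    Function.Injective φ ∧
    (∀ p, star (φ p) ⬝ᵥ φ p = 1) ∧
    (∀ p q, p ≠ q → ‖star (φ p) ⬝ᵥ φ q‖ ^ 2 = 1 / 4) := by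
  intro ω hω X Z hX hZ ψ hψ φ hφ
  have hω3 : ω ^ 3 = 1 := by
    rw [hω, ← Complex.exp_nat_mul]
    rw [show ((3:ℕ):ℂ) * (2 * Real.pi * Complex.I / 3) = 2 * Real.pi * Complex.I by
      push_cast; ring]
    exact Complex.exp_two_pi_mul_I
  have hω' : ω = Complex.exp ((2 * Real.pi / 3 : ℝ) * Complex.I) := by
    rw [hω]; push_cast; ring_nf
  have him : ω.im = Real.sin (2 * Real.pi / 3) := by
    rw [hω']; rw [Complex.exp_ofReal_mul_I_im]
  have hpos : 0 < Real.sin (2 * Real.pi / 3) := by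
    apply Real.sin_pos_of_pos_of_lt_pi <;> nlinarith [Real.pi_pos]
  have hne1 : ω ≠ 1 := by
    intro h; rw [h] at him; simp at him; linarith
  have hsum : 1 + ω + ω ^ 2 = 0 := by
    have hfac : (ω - 1) * (1 + ω + ω ^ 2) = 0 := by linear_combination hω3
    rcases mul_eq_zero.mp hfac with h1 | h2
    · exact absurd (sub_eq_zero.mp h1) hne1
    · exact h2
  have hconj : (starRingEnd ℂ) ω = ω ^ 2 := by
    have h1 : (starRingEnd ℂ) ω = ω⁻¹ := by
      rw [hω, ← Complex.exp_conj]
      rw [show (starRingEnd ℂ) (2 * Real.pi * Complex.I / 3) = -(2 * Real.pi * Complex.I / 3) by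
        simp [map_div₀, Complex.conj_I, Complex.conj_ofReal, _root_.map_mul, map_ofNat]; ring]
      rw [Complex.exp_neg]
    rw [h1, inv_eq_of_mul_eq_one_right (show ω * ω ^ 2 = 1 by linear_combination hω3)]
  have hs0 : ((Real.sqrt 2 : ℝ) : ℂ) ≠ 0 := by norm_cast; positivity
  have ht2 : ((Real.sqrt 2 : ℝ) : ℂ) ^ 2 = 2 := by
    rw [← Complex.ofReal_pow, Real.sq_sqrt (by norm_num : (0:ℝ) ≤ 2)]; norm_num
  have hv2 : (((Real.sqrt 2 : ℝ) : ℂ)⁻¹) ^ 2 = 1/2 := by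
    rw [inv_pow, ht2]; norm_num
  have hv3 : (((Real.sqrt 2 : ℝ) : ℂ)⁻¹) ^ 3 = (1/2) * (((Real.sqrt 2 : ℝ) : ℂ)⁻¹) := by
    rw [pow_succ, hv2]
  have hv4 : (((Real.sqrt 2 : ℝ) : ℂ)⁻¹) ^ 4 = 1/4 := by
    rw [show (4:ℕ) = 2*2 from rfl, pow_mul, hv2]; norm_num
  have hmod : ∀ n : ℕ, ω ^ n = ω ^ (n % 3) := by
    intro n
    conv_lhs => rw [← Nat.div_add_mod n 3]
    rw [pow_add, pow_mul, hω3, one_pow, one_mul]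
  have hω2 : ω ^ 2 = -1 - ω := by linear_combination hsum
  have hvec : ∀ a b : Fin 3, φ (a, b) =
      ![![![0, ((Real.sqrt 2 : ℝ) : ℂ)⁻¹, -((Real.sqrt 2 : ℝ) : ℂ)⁻¹], ![0, ω*((Real.sqrt 2 : ℝ) : ℂ)⁻¹, -(ω^2*((Real.sqrt 2 : ℝ) : ℂ)⁻¹)], ![0, ω^2*((Real.sqrt 2 : ℝ) : ℂ)⁻¹, -(ω*((Real.sqrt 2 : ℝ) : ℂ)⁻¹)]],
        ![![-((Real.sqrt 2 : ℝ) : ℂ)⁻¹, 0, ((Real.sqrt 2 : ℝ) : ℂ)⁻¹], ![-(ω^2*((Real.sqrt 2 : ℝ) : ℂ)⁻¹), 0, ω*((Real.sqrt 2 : ℝ) : ℂ)⁻¹], ![-(ω*((Real.sqrt 2 : ℝ) : ℂ)⁻¹), 0, ω^2*((Real.sqrt 2 : ℝ) : ℂ)⁻¹]],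
        ![![((Real.sqrt 2 : ℝ) : ℂ)⁻¹, -((Real.sqrt 2 : ℝ) : ℂ)⁻¹, 0], ![ω*((Real.sqrt 2 : ℝ) : ℂ)⁻¹, -(ω^2*((Real.sqrt 2 : ℝ) : ℂ)⁻¹), 0], ![ω^2*((Real.sqrt 2 : ℝ) : ℂ)⁻¹, -(ω*((Real.sqrt 2 : ℝ) : ℂ)⁻¹), 0]]] a b := by
    intro a b
    subst hφ hX hZ hψ
    fin_cases a <;> fin_cases b <;> (funext i; fin_cases i) <;>
      · simp [Matrix.mul_apply, Matrix.mulVec, dotProduct, Fin.sum_univ_three,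
          Matrix.one_apply, pow_succ, pow_zero, Fin.val_zero, Fin.val_one, Fin.val_two]
        try ring_nf
        try simp only [hmod, Nat.reduceMod, pow_zero, pow_one, hω2, eq_self_iff_true,
          true_or, or_true]
        try ring_nf
        try tauto
  have key : ∀ z : ℂ, z * (starRingEnd ℂ) z = 1/4 → ‖z‖ ^ 2 = 1/4 := by
    intro z h
    rw [show ((1:ℂ)/4) = ((1/4 : ℝ) : ℂ) by norm_num] at h
    rw [Complex.mul_conj] at h
    rw [Complex.sq_norm, Complex.ofReal_inj.mp h]
  have hunit : ∀ p, star (φ p) ⬝ᵥ φ p = 1 := by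
    intro p
    obtain ⟨a, b⟩ := p
    rw [hvec a b]
    fin_cases a <;> fin_cases b <;>
      · simp [dotProduct, Fin.sum_univ_three, Pi.star_apply, RCLike.star_def,
          _root_.map_mul, map_add, map_neg, map_inv₀, map_pow, Complex.conj_ofReal, hconj]
        try ring_nf
        try simp only [hmod, Nat.reduceMod]
        try simp only [pow_zero, pow_one, hω2, hv2, hv3, hv4]
        try ring_nf
        try norm_num
        try tauto
        try (simp only [hω2]; ring_nf)
        try norm_num
  have hover : ∀ p q, p ≠ q → ‖star (φ p) ⬝ᵥ φ q‖ ^ 2 = 1 / 4 := by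
    intro p q hpq
    obtain ⟨a, b⟩ := p
    obtain ⟨a', b'⟩ := q
    rw [hvec a b, hvec a' b']
    apply key
    fin_cases a <;> fin_cases b <;> fin_cases a' <;> fin_cases b' <;>
      first
      | exact absurd rfl hpq
      | · simp [dotProduct, Fin.sum_univ_three, Pi.star_apply, RCLike.star_def,
            _root_.map_mul, map_add, map_neg, map_inv₀, map_pow, Complex.conj_ofReal, hconj]
          try ring_nf
          try simp only [hmod, Nat.reduceMod]
          try simp only [pow_zero, pow_one, hω2, hv2, hv3, hv4]
          try ring_nf
          try norm_num
          try tauto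
          try (simp only [hω2]; ring_nf)
          try norm_num
  refine ⟨?_, hunit, hover⟩
  intro p q h
  by_contra hne
  have h1 := hover p q hne
  rw [h, hunit q] at h1
  norm_num at h1
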